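/- Let α, β, γ be finite types with decidable equality and let A : Matrix (α ⊕ (β ⊕ γ)) (α ⊕ (β ⊕ γ)) (ZMod 2) be symmetric. Suppose M₁ : Matrix α (β ⊕ γ) (ZMod 2) satisfies A.toBlocks₁₂ = A.toBlocks₁₁ * M₁, and set B := A.toBlocks₂₂ - M₁ᵀ * A.toBlocks₁₁ * M₁. Suppose further that M₂ : Matrix β γ (ZMod 2) satisfies B.toBlocks₁₂ = B.toBlocks₁₁ * M₂, and let A' be the reindexing of A along the equivalence α ⊕ (β ⊕ γ) ≃ (α ⊕ β) ⊕ γ, with M : Matrix (α ⊕ β) γ (ZMod 2) satisfying A'.toBlocks₁₂ = A'.toBlocks₁₁ * M. Then B.toBlocks₂₂ - M₂ᵀ * B.toBlocks₁₁ * M₂ = A'.toBlocks₂₂ - Mᵀ * A'.toBlocks₁₁ * M. (Path invariance: Γ_β(Γ_α(A)) = Γ_{α∪β}(A).) -/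

import Mathlib

open Matrix

private lemma aux_stmt7 {α β γ : Type*} [Fintype α] [DecidableEq α] [Fintype β] [DecidableEq β]
    [Fintype γ] [DecidableEq γ]
    (P : Matrix α α (ZMod 2)) (hPsym : Pᵀ = P)
    (Sββ : Matrix β β (ZMod 2)) (hSsym : Sββᵀ = Sββ)
    (Sβγ : Matrix β γ (ZMod 2)) (Sγγ : Matrix γ γ (ZMod 2))
    (M₁β : Matrix α β (ZMod 2)) (M₁γ : Matrix α γ (ZMod 2))
    (M₂ : Matrix β γ (ZMod 2))
    (hM₂ : Sβγ - M₁βᵀ * P * M₁γ = (Sββ - M₁βᵀ * P * M₁β) * M₂)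
    (M : Matrix (α ⊕ β) γ (ZMod 2))
    (hM : fromRows (P * M₁γ) Sβγ = fromBlocks P (P * M₁β) (P * M₁β)ᵀ Sββ * M) :
    (Sγγ - M₁γᵀ * P * M₁γ) - M₂ᵀ * (Sββ - M₁βᵀ * P * M₁β) * M₂ =
      Sγγ - Mᵀ * (fromBlocks P (P * M₁β) (P * M₁β)ᵀ Sββ) * M := by
  set G := fromBlocks P (P * M₁β) (P * M₁β)ᵀ Sββ with hG
  set N : Matrix (α ⊕ β) γ (ZMod 2) := fromRows (M₁γ - M₁β * M₂) M₂ with hN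
  have hGsym : Gᵀ = G := by
    rw [hG, fromBlocks_transpose, transpose_transpose, hPsym, hSsym]
  have hGN : G * N = fromRows (P * M₁γ) Sβγ := by
    rw [hG, hN, fromBlocks_mul_fromRows]
    have h1 : P * (M₁γ - M₁β * M₂) + P * M₁β * M₂ = P * M₁γ := by
      simp only [Matrix.mul_sub, Matrix.mul_assoc]
      abel
    have h2 : (P * M₁β)ᵀ * (M₁γ - M₁β * M₂) + Sββ * M₂ = Sβγ := by
      rw [transpose_mul, hPsym]
      rw [sub_eq_iff_eq_add] at hM₂
      rw [hM₂]
      simp only [Matrix.mul_sub, Matrix.sub_mul, Matrix.mul_assoc]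
      abel
    rw [h1, h2]
  have indep : Mᵀ * G * M = Nᵀ * G * N := by
    calc Mᵀ * G * M = Mᵀ * (G * N) := by rw [Matrix.mul_assoc, ← hM, hGN]
      _ = (Gᵀ * M)ᵀ * N := by rw [transpose_mul, transpose_transpose, Matrix.mul_assoc]
      _ = (G * M)ᵀ * N := by rw [hGsym]
      _ = (G * N)ᵀ * N := by rw [← hM, hGN]
      _ = Nᵀ * G * N := by rw [transpose_mul, hGsym, Matrix.mul_assoc]
  rw [indep, Matrix.mul_assoc Nᵀ, hGN, hN, transpose_fromRows, fromCols_mul_fromRows]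
  have key : M₂ᵀ * (Sββ - M₁βᵀ * P * M₁β) * M₂ = M₂ᵀ * Sβγ - M₂ᵀ * (M₁βᵀ * (P * M₁γ)) := by
    rw [Matrix.mul_assoc, ← hM₂, Matrix.mul_sub, Matrix.mul_assoc]
  rw [key]
  simp only [transpose_sub, transpose_mul, Matrix.sub_mul, Matrix.mul_assoc]
  abel

theorem stmt_7 {α β γ : Type*} [Fintype α] [DecidableEq α] [Fintype β] [DecidableEq β]
    [Fintype γ] [DecidableEq γ]
    (A : Matrix (α ⊕ (β ⊕ γ)) (α ⊕ (β ⊕ γ)) (ZMod 2)) (hA : Aᵀ = A)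
    (M₁ : Matrix α (β ⊕ γ) (ZMod 2)) (hM₁ : A.toBlocks₁₂ = A.toBlocks₁₁ * M₁)
    (B : Matrix (β ⊕ γ) (β ⊕ γ) (ZMod 2)) (hB : B = A.toBlocks₂₂ - M₁ᵀ * A.toBlocks₁₁ * M₁)
    (M₂ : Matrix β γ (ZMod 2)) (hM₂ : B.toBlocks₁₂ = B.toBlocks₁₁ * M₂)
    (A' : Matrix ((α ⊕ β) ⊕ γ) ((α ⊕ β) ⊕ γ) (ZMod 2))
    (hA' : A' = Matrix.reindex (Equiv.sumAssoc α β γ).symm (Equiv.sumAssoc α β γ).symm A)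
    (M : Matrix (α ⊕ β) γ (ZMod 2)) (hM : A'.toBlocks₁₂ = A'.toBlocks₁₁ * M) :
    B.toBlocks₂₂ - M₂ᵀ * B.toBlocks₁₁ * M₂ = A'.toBlocks₂₂ - Mᵀ * A'.toBlocks₁₁ * M := by
  classical
  have hAsym : ∀ x y, A y x = A x y := fun x y => by
    conv_lhs => rw [← hA]
    simp [transpose_apply]
  have hPsym : (A.toBlocks₁₁)ᵀ = A.toBlocks₁₁ := by
    ext i j; simp [toBlocks₁₁, transpose_apply, hAsym]
  have hSsym : (A.toBlocks₂₂.toBlocks₁₁)ᵀ = A.toBlocks₂₂.toBlocks₁₁ := by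
    ext i j; simp [toBlocks₁₁, toBlocks₂₂, transpose_apply, hAsym]
  have hQβ : A.toBlocks₁₂.toCols₁ = A.toBlocks₁₁ * M₁.toCols₁ := by
    rw [hM₁]
    ext i j
    simp [toCols₁, mul_apply]
  have hQγ : A.toBlocks₁₂.toCols₂ = A.toBlocks₁₁ * M₁.toCols₂ := by
    rw [hM₁]
    ext i j
    simp [toCols₂, mul_apply]
  have hB11 : B.toBlocks₁₁ =
      A.toBlocks₂₂.toBlocks₁₁ - M₁.toCols₁ᵀ * A.toBlocks₁₁ * M₁.toCols₁ := by
    ext i j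
    simp [hB, toBlocks₁₁, toBlocks₂₂, mul_apply, Finset.sum_mul, Finset.mul_sum,
      transpose_apply, toCols₁, Matrix.sub_apply]
  have hB12 : B.toBlocks₁₂ =
      A.toBlocks₂₂.toBlocks₁₂ - M₁.toCols₁ᵀ * A.toBlocks₁₁ * M₁.toCols₂ := by
    ext i j
    simp [hB, toBlocks₁₂, toBlocks₂₂, mul_apply, Finset.sum_mul, Finset.mul_sum,
      transpose_apply, toCols₁, toCols₂, Matrix.sub_apply]
  have hB22 : B.toBlocks₂₂ =
      A.toBlocks₂₂.toBlocks₂₂ - M₁.toCols₂ᵀ * A.toBlocks₁₁ * M₁.toCols₂ := by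
    ext i j
    simp [hB, toBlocks₂₂, mul_apply, Finset.sum_mul, Finset.mul_sum,
      transpose_apply, toCols₂, Matrix.sub_apply]
  have hA11 : A'.toBlocks₁₁ = fromBlocks A.toBlocks₁₁ (A.toBlocks₁₁ * M₁.toCols₁)
      (A.toBlocks₁₁ * M₁.toCols₁)ᵀ A.toBlocks₂₂.toBlocks₁₁ := by
    rw [← hQβ]
    ext (i | i) (j | j) <;>
      simp [hA', toBlocks₁₁, toBlocks₂₂, fromBlocks, toCols₁, toBlocks₁₂, Equiv.sumAssoc,
        transpose_apply, hAsym]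
  have hA12 : A'.toBlocks₁₂ = fromRows (A.toBlocks₁₁ * M₁.toCols₂)
      A.toBlocks₂₂.toBlocks₁₂ := by
    rw [← hQγ]
    ext (i | i) j <;>
      simp [hA', toBlocks₁₂, toBlocks₂₂, fromRows_apply_inl, fromRows_apply_inr, toCols₂, Equiv.sumAssoc]
  have hA22 : A'.toBlocks₂₂ = A.toBlocks₂₂.toBlocks₂₂ := by
    ext i j; simp [hA', toBlocks₂₂, Equiv.sumAssoc]
  rw [hB11, hB12] at hM₂
  rw [hA11, hA12] at hM
  rw [hB22, hB11, hA22, hA11]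
  exact aux_stmt7 _ hPsym _ hSsym _ _ _ _ _ hM₂ M hM
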